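/- Let Γ(t) be a C¹ closed surface in ℝ³ with outward unit normal n and orthonormal tangent frame (τ₁, τ₂) such that (τ₁, τ₂, n) is a direct orthonormal frame, separating Ω⁺(t) from Ω⁻(t). Suppose u is continuous across Γ(t), with u^± ∈ C¹ up to Γ(t) from each side, div u⁺ = div u⁻ on Γ(t), curl u⁻ = 0 on Γ(t), and curl u⁺ · n = 0 on Γ(t). Then the jump of the normal derivative of u across Γ(t) satisfies [∇_n u] = (curl u⁺·τ₂) τ₁ − (curl u⁺·τ₁) τ₂ on Γ(t). -/

import Mathlib

open MeasureTheory Set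
open scoped RealInnerProductSpace

noncomputable section

abbrev Euc (n : ℕ) : Type := EuclideanSpace ℝ (Fin n)

/-- Partial derivative (vector valued). -/
def pdv {n m : ℕ} (j : Fin n) (f : Euc n → Euc m) (x : Euc n) : Euc m :=
  fderiv ℝ f x (EuclideanSpace.single j 1)

/-- Divergence. -/
def divE {n : ℕ} (f : Euc n → Euc n) (x : Euc n) : ℝ := ∑ j, pdv j f x j

def mk3 (a b c : ℝ) : Euc 3 := (WithLp.equiv 2 (Fin 3 → ℝ)).symm ![a, b, c]

/-- Curl in 3-D. -/
def curl3 (f : Euc 3 → Euc 3) (x : Euc 3) : Euc 3 :=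
  mk3 (pdv 1 f x 2 - pdv 2 f x 1) (pdv 2 f x 0 - pdv 0 f x 2) (pdv 0 f x 1 - pdv 1 f x 0)

/-- Cross product in 3-D. -/
def cross3 (a b : Euc 3) : Euc 3 :=
  mk3 (a 1 * b 2 - a 2 * b 1) (a 2 * b 0 - a 0 * b 2) (a 0 * b 1 - a 1 * b 0)

/-- Scalar triple product cyclicity. -/
lemma triple3 (a u v : Euc 3) : ⟪cross3 a u, v⟫ = ⟪u, cross3 v a⟫ := by
  simp [cross3, mk3, PiLp.inner_apply, Fin.sum_univ_three]; ring

lemma inner_cross_self (a b : Euc 3) : ⟪cross3 a b, a⟫ = 0 := by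
  simp [cross3, mk3, PiLp.inner_apply, Fin.sum_univ_three]; ring

lemma inner_cross_self' (a b : Euc 3) : ⟪cross3 a b, b⟫ = 0 := by
  simp [cross3, mk3, PiLp.inner_apply, Fin.sum_univ_three]; ring

/-- Across a `C¹` interface surface in `ℝ³` with direct orthonormal frame
`(τ₁, τ₂, n)`, if `u` is continuous across the surface, `C¹` from each side, with continuous
divergence, `curl u⁻ = 0` and `curl u⁺ · n = 0`, then
`[∇_n u] = (curl u⁺·τ₂) τ₁ − (curl u⁺·τ₁) τ₂`. -/
theorem jump_normal_derivative_3d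
    (Γ : Set (Euc 3)) (up um : Euc 3 → Euc 3) (x τ₁ τ₂ nv : Euc 3)
    (hx : x ∈ Γ)
    (hτ₁ : ‖τ₁‖ = 1) (hτ₂ : ‖τ₂‖ = 1) (hn : ‖nv‖ = 1)
    (hfr₁ : cross3 τ₁ τ₂ = nv) (hfr₂ : cross3 τ₂ nv = τ₁) (hfr₃ : cross3 nv τ₁ = τ₂)
    (hup : DifferentiableAt ℝ up x) (hum : DifferentiableAt ℝ um x)
    (hcont : ∀ y ∈ Γ, up y = um y)
    (γ₁ γ₂ : ℝ → Euc 3) (hγ₁0 : γ₁ 0 = x) (hγ₂0 : γ₂ 0 = x)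
    (hγ₁τ : HasDerivAt γ₁ τ₁ 0) (hγ₂τ : HasDerivAt γ₂ τ₂ 0)
    (hγ₁Γ : ∀ᶠ s in nhds (0 : ℝ), γ₁ s ∈ Γ) (hγ₂Γ : ∀ᶠ s in nhds (0 : ℝ), γ₂ s ∈ Γ)
    (hdiv : divE up x = divE um x)
    (hcurlm : curl3 um x = 0)
    (hcurln : ⟪curl3 up x, nv⟫ = 0) :
    fderiv ℝ up x nv - fderiv ℝ um x nv
      = ⟪curl3 up x, τ₂⟫ • τ₁ - ⟪curl3 up x, τ₁⟫ • τ₂ := by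
  set A := fderiv ℝ up x with hA
  set B := fderiv ℝ um x with hB
  set w : Euc 3 := A nv - B nv with hw
  -- tangential derivatives agree
  have key : ∀ (γ : ℝ → Euc 3) (τ : Euc 3), γ 0 = x → HasDerivAt γ τ 0 →
      (∀ᶠ s in nhds (0:ℝ), γ s ∈ Γ) → A τ = B τ := by
    intro γ τ hγ0 hγτ hγΓ
    have h1 : HasDerivAt (up ∘ γ) (A τ) 0 := by
      refine HasFDerivAt.comp_hasDerivAt _ ?_ hγτ
      rw [hγ0]; exact hup.hasFDerivAt
    have h2 : HasDerivAt (um ∘ γ) (B τ) 0 := by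
      refine HasFDerivAt.comp_hasDerivAt _ ?_ hγτ
      rw [hγ0]; exact hum.hasFDerivAt
    have heq : (up ∘ γ) =ᶠ[nhds (0:ℝ)] (um ∘ γ) :=
      hγΓ.mono fun s hs => hcont _ hs
    have h1' : HasDerivAt (um ∘ γ) (A τ) 0 := h1.congr_of_eventuallyEq heq.symm
    exact h1'.unique h2
  have hDτ₁ : A τ₁ = B τ₁ := key γ₁ τ₁ hγ₁0 hγ₁τ hγ₁Γ
  have hDτ₂ : A τ₂ = B τ₂ := key γ₂ τ₂ hγ₂0 hγ₂τ hγ₂Γ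
  -- orthonormal frame
  have hip : ∀ a : Euc 3, ‖a‖ = 1 → ⟪a, a⟫ = 1 := by
    intro a ha; rw [real_inner_self_eq_norm_sq, ha]; norm_num
  have h12 : ⟪τ₁, τ₂⟫ = 0 := by rw [← hfr₂]; exact inner_cross_self τ₂ nv
  have h1n : ⟪τ₁, nv⟫ = 0 := by rw [← hfr₂]; exact inner_cross_self' τ₂ nv
  have h2n : ⟪τ₂, nv⟫ = 0 := by rw [← hfr₃]; exact inner_cross_self nv τ₁
  have h21 : ⟪τ₂, τ₁⟫ = 0 := by rw [real_inner_comm]; exact h12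
  have hn1 : ⟪nv, τ₁⟫ = 0 := by rw [real_inner_comm]; exact h1n
  have hn2 : ⟪nv, τ₂⟫ = 0 := by rw [real_inner_comm]; exact h2n
  set f : Fin 3 → Euc 3 := ![τ₁, τ₂, nv] with hf
  have hon : Orthonormal ℝ f := by
    rw [orthonormal_iff_ite]
    intro i j
    fin_cases i <;> fin_cases j <;>
      simp only [f, Matrix.cons_val_zero, Matrix.cons_val_one, Matrix.head_cons,
        Matrix.cons_val_two, Matrix.tail_cons, Fin.isValue, Fin.zero_eta, Fin.mk_one] <;>
      norm_num <;>
      first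
        | exact hip _ hτ₁ | exact hip _ hτ₂ | exact hip _ hn
        | assumption | exact Or.inl (by assumption)
  have hcard : Fintype.card (Fin 3) = Module.finrank ℝ (Euc 3) := by
    simp [finrank_euclideanSpace]
  set bb := basisOfOrthonormalOfCardEqFinrank hon hcard with hbb
  have hbbcoe : ⇑bb = f := coe_basisOfOrthonormalOfCardEqFinrank hon hcard
  set b : OrthonormalBasis (Fin 3) ℝ (Euc 3) :=
    bb.toOrthonormalBasis (by rwa [hbbcoe]) with hb
  have hbcoe : ⇑b = f := by
    rw [hb, Module.Basis.coe_toOrthonormalBasis, hbbcoe]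
  have expand : ∀ v : Euc 3, ⟪τ₁, v⟫ • τ₁ + ⟪τ₂, v⟫ • τ₂ + ⟪nv, v⟫ • nv = v := by
    intro v
    have := b.sum_repr' v
    rw [Fin.sum_univ_three] at this
    simpa [hbcoe, f] using this
  -- the jump of the differential is a rank-one map in direction nv
  have hDv : ∀ v : Euc 3, A v - B v = ⟪nv, v⟫ • w := by
    intro v
    conv_lhs => rw [← expand v]
    simp only [map_add, _root_.map_smul, hDτ₁, hDτ₂, hw, smul_sub]
    abel
  have hd : ∀ (i j : Fin 3), A (EuclideanSpace.single j 1) i - B (EuclideanSpace.single j 1) i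
      = nv j * w i := by
    intro i j
    have h := congrArg (fun v : Euc 3 => v i) (hDv (EuclideanSpace.single j 1))
    simp only [PiLp.sub_apply, PiLp.smul_apply, smul_eq_mul] at h
    have hin : ⟪nv, EuclideanSpace.single j (1:ℝ)⟫ = nv j := by
      simp [PiLp.inner_apply, EuclideanSpace.single_apply, Finset.mul_sum]
    rw [hin] at h
    exact h
  -- trace condition : ⟪nv, w⟫ = 0
  have htr : ⟪nv, w⟫ = 0 := by
    have h0 : divE up x - divE um x = 0 := by rw [hdiv]; ring
    have hsum : ∀ j : Fin 3, pdv j up x j - pdv j um x j = nv j * w j := by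
      intro j
      simpa [pdv, ← hA, ← hB] using hd j j
    rw [divE, divE, ← Finset.sum_sub_distrib] at h0
    rw [PiLp.inner_apply]
    simp only [RCLike.inner_apply, conj_trivial]
    calc ∑ i, w i * nv i = ∑ j : Fin 3, (pdv j up x j - pdv j um x j) :=
          Finset.sum_congr rfl fun j _ => by rw [mul_comm, hsum j]
      _ = 0 := h0
  -- curl of the jump
  have hc : curl3 up x = cross3 nv w := by
    have hc0 : curl3 up x 0 = cross3 nv w 0 := by
      have hm0 := congrArg (fun v : Euc 3 => v 0) hcurlm
      have e1 := hd 2 1; have e2 := hd 1 2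
      simp only [curl3, cross3, mk3, pdv, ← hA, ← hB, WithLp.equiv_symm_apply, PiLp.toLp_apply,
        Matrix.cons_val_zero, PiLp.zero_apply] at hm0 ⊢
      linarith
    have hc1 : curl3 up x 1 = cross3 nv w 1 := by
      have hm0 := congrArg (fun v : Euc 3 => v 1) hcurlm
      have e1 := hd 0 2; have e2 := hd 2 0
      simp only [curl3, cross3, mk3, pdv, ← hA, ← hB, WithLp.equiv_symm_apply, PiLp.toLp_apply,
        Matrix.cons_val_one, Matrix.head_cons, Matrix.cons_val_zero, PiLp.zero_apply] at hm0 ⊢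
      linarith
    have hc2 : curl3 up x 2 = cross3 nv w 2 := by
      have hm0 := congrArg (fun v : Euc 3 => v 2) hcurlm
      have e1 := hd 1 0; have e2 := hd 0 1
      simp only [curl3, cross3, mk3, pdv, ← hA, ← hB, WithLp.equiv_symm_apply, PiLp.toLp_apply,
        Matrix.cons_val_two, Matrix.tail_cons, Matrix.head_cons, PiLp.zero_apply] at hm0 ⊢
      linarith
    ext i
    fin_cases i
    · exact hc0
    · exact hc1
    · exact hc2
  -- final computation
  have hct2 : ⟪curl3 up x, τ₂⟫ = ⟪w, τ₁⟫ := by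
    rw [hc, triple3, hfr₂]
  have hanti : cross3 τ₁ nv = -τ₂ := by
    rw [← hfr₃]
    ext i; fin_cases i <;>
      simp [cross3, mk3] <;> ring
  have hct1 : ⟪curl3 up x, τ₁⟫ = -⟪w, τ₂⟫ := by
    rw [hc, triple3, hanti]
    simp [inner_neg_right]
  rw [hct2, hct1]
  have hfinal := expand w
  rw [htr, zero_smul, add_zero] at hfinal
  rw [← real_inner_comm w τ₁, ← real_inner_comm w τ₂]
  calc w = ⟪τ₁, w⟫ • τ₁ + ⟪τ₂, w⟫ • τ₂ := hfinal.symm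
    _ = ⟪τ₁, w⟫ • τ₁ - (-⟪τ₂, w⟫) • τ₂ := by module

end
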